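/- Let A be Bernoulli(π), 0<π<1, independent of X with E(X)=0 and E(XXᵀ)=Σ. Let ε₁ be the residual from a constrained population least squares problem with constraint sets (Γ₁,Δ₁), and let ε₂ = ε₁ + (γ₁−γ₂)ᵀX + A(δ₁−δ₂)ᵀX be the residual for a nested problem (Γ₂,Δ₂) with Γ₂ ⊆ Γ₁ and Δ₂ ⊆ Δ₁. If either π = 1/2 or the unconstrained coordinate set of Δ₁ contains that of Γ₁, then E[(A−π)²ε₂²] ≥ E[(A−π)²ε₁²]. -/

import Mathlib

open MeasureTheory ProbabilityTheory

private lemma mulL2 {Ω : Type*} [MeasurableSpace Ω] {μ : Measure Ω} {f g : Ω → ℝ}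
    (hf : MemLp f 2 μ) (hg : MemLp g 2 μ) : Integrable (fun ω => f ω * g ω) μ :=
  memLp_one_iff_integrable.mp (hg.smul (r := 1) hf)

/-- Theorem 1 of the paper: Let `A` be Bernoulli(π) independent of mean-zero `X`.
Let `ε₁` be the residual of the constrained least squares problem with constraint sets
`(Γ₁, Δ₁)` (encoded through its first-order orthogonality conditions on the unconstrained
coordinate sets `UΓ₁, UΔ₁`), and `ε₂ = ε₁ + (γ₁-γ₂)ᵀX + A(δ₁-δ₂)ᵀX` the residual of a nested
problem (`UΓ₂ ⊆ UΓ₁`, `UΔ₂ ⊆ UΔ₁`, with the coefficient differences supported on `UΓ₁`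
resp. `UΔ₁`).  If `π = 1/2` or `UΓ₁ ⊆ UΔ₁`, then `E[(A-π)²ε₂²] ≥ E[(A-π)²ε₁²]`. -/
theorem stmt_3 {Ω : Type*} [MeasurableSpace Ω] (μ : Measure Ω) [IsProbabilityMeasure μ]
    {p : ℕ} (π : ℝ) (hπ0 : 0 < π) (hπ1 : π < 1)
    (A : Ω → ℝ) (X : Ω → Fin p → ℝ)
    (hA01 : ∀ ω, A ω = 0 ∨ A ω = 1)
    (hAmean : ∫ ω, A ω ∂μ = π)
    (hindep : IndepFun A X μ)
    (hXmean : ∀ j, ∫ ω, X ω j ∂μ = 0)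
    (UΓ₁ UΔ₁ UΓ₂ UΔ₂ : Set (Fin p)) (hΓnest : UΓ₂ ⊆ UΓ₁) (hΔnest : UΔ₂ ⊆ UΔ₁)
    (γ₁ γ₂ δ₁ δ₂ : Fin p → ℝ) (ε₁ ε₂ : Ω → ℝ)
    (hε₁L2 : MemLp ε₁ 2 μ) (hXL2 : ∀ j, MemLp (fun ω => X ω j) 2 μ)
    (horth0 : ∫ ω, ε₁ ω ∂μ = 0)
    (horthA : ∫ ω, ε₁ ω * A ω ∂μ = 0)
    (horthX : ∀ j ∈ UΓ₁, ∫ ω, ε₁ ω * X ω j ∂μ = 0)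
    (horthAX : ∀ j ∈ UΔ₁, ∫ ω, ε₁ ω * A ω * X ω j ∂μ = 0)
    (hsuppγ : ∀ j ∉ UΓ₁, γ₁ j - γ₂ j = 0)
    (hsuppδ : ∀ j ∉ UΔ₁, δ₁ j - δ₂ j = 0)
    (hε₂ : ∀ ω, ε₂ ω = ε₁ ω + (∑ j, (γ₁ j - γ₂ j) * X ω j)
        + A ω * ∑ j, (δ₁ j - δ₂ j) * X ω j)
    (hcond : π = 1 / 2 ∨ UΓ₁ ⊆ UΔ₁) :
    ∫ ω, (A ω - π) ^ 2 * ε₁ ω ^ 2 ∂μ ≤ ∫ ω, (A ω - π) ^ 2 * ε₂ ω ^ 2 ∂μ := by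
  classical
  -- A is a.e. strongly measurable (its integral is nonzero)
  have hAint : Integrable A μ := by
    by_contra h
    rw [integral_undef h] at hAmean
    linarith
  have hAsm : AEStronglyMeasurable A μ := hAint.1
  have hAbd : ∀ ω, ‖A ω‖ ≤ 1 := by
    intro ω; rcases hA01 ω with h | h <;> simp [h]
  -- shorthand
  set c : Fin p → ℝ := fun j => γ₁ j - γ₂ j with hc
  set e : Fin p → ℝ := fun j => δ₁ j - δ₂ j with he
  set g : Ω → ℝ := fun ω => ∑ j, c j * X ω j with hg
  set d : Ω → ℝ := fun ω => ∑ j, e j * X ω j with hd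
  -- L² facts
  have hgL2 : MemLp g 2 μ :=
    memLp_finset_sum (f := fun j ω => c j * X ω j) Finset.univ
      (fun j _ => (hXL2 j).const_mul (c j))
  have hdL2 : MemLp d 2 μ :=
    memLp_finset_sum (f := fun j ω => e j * X ω j) Finset.univ
      (fun j _ => (hXL2 j).const_mul (e j))
  have hAdL2 : MemLp (fun ω => A ω * d ω) 2 μ := by
    refine MemLp.of_le hdL2 (hAsm.mul hdL2.aestronglyMeasurable) ?_
    filter_upwards with ω
    calc ‖A ω * d ω‖ = ‖A ω‖ * ‖d ω‖ := norm_mul _ _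
      _ ≤ 1 * ‖d ω‖ := by gcongr; exact hAbd ω
      _ = ‖d ω‖ := one_mul _
  have hε₁AL2 : MemLp (fun ω => ε₁ ω * A ω) 2 μ := by
    refine MemLp.of_le hε₁L2 (hε₁L2.aestronglyMeasurable.mul hAsm) ?_
    filter_upwards with ω
    calc ‖ε₁ ω * A ω‖ = ‖ε₁ ω‖ * ‖A ω‖ := norm_mul _ _
      _ ≤ ‖ε₁ ω‖ * 1 := by gcongr; exact hAbd ω
      _ = ‖ε₁ ω‖ := mul_one _
  have hgAdL2 : MemLp (fun ω => g ω + A ω * d ω) 2 μ := hgL2.add hAdL2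
  have hε₂L2 : MemLp ε₂ 2 μ := by
    have : ε₂ = fun ω => ε₁ ω + (g ω + A ω * d ω) := by
      funext ω; rw [hε₂ ω]; ring
    rw [this]
    exact hε₁L2.add hgAdL2
  have hAπsm : AEStronglyMeasurable (fun ω => (A ω - π) ^ 2) μ := by
    have h0 : AEStronglyMeasurable (fun ω => A ω - π) μ := hAsm.sub aestronglyMeasurable_const
    exact (h0.mul h0).congr (Filter.Eventually.of_forall fun ω => by simp only [Pi.mul_apply]; ring)
  -- key orthogonality computation
  have key : ∀ (co : Fin p → ℝ) (U : Set (Fin p)) (h : Ω → ℝ),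
      (∀ j, Integrable (fun ω => h ω * X ω j) μ) →
      (∀ j ∈ U, ∫ ω, h ω * X ω j ∂μ = 0) → (∀ j ∉ U, co j = 0) →
      ∫ ω, h ω * ∑ j, co j * X ω j ∂μ = 0 := by
    intro co U h hint horth hsupp
    have heq : ∀ ω, h ω * ∑ j, co j * X ω j = ∑ j, co j * (h ω * X ω j) := by
      intro ω
      rw [Finset.mul_sum]
      exact Finset.sum_congr rfl fun j _ => by ring
    simp_rw [heq]
    rw [integral_finset_sum _ (fun j _ => (hint j).const_mul (co j))]
    refine Finset.sum_eq_zero fun j _ => ?_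
    rw [integral_const_mul]
    by_cases hj : j ∈ U
    · rw [horth j hj, mul_zero]
    · rw [hsupp j hj, zero_mul]
  -- integrability of elementary products
  have intXε : ∀ j, Integrable (fun ω => ε₁ ω * X ω j) μ :=
    fun j => mulL2 hε₁L2 (hXL2 j)
  have intAXε : ∀ j, Integrable (fun ω => (ε₁ ω * A ω) * X ω j) μ :=
    fun j => mulL2 hε₁AL2 (hXL2 j)
  -- the three cross integrals
  have I1 : ∫ ω, ε₁ ω * g ω ∂μ = 0 :=
    key c UΓ₁ ε₁ intXε horthX hsuppγ
  have I2 : ∫ ω, (ε₁ ω * A ω) * d ω ∂μ = 0 := by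
    refine key e UΔ₁ (fun ω => ε₁ ω * A ω) intAXε ?_ hsuppδ
    intro j hj
    simpa [mul_assoc] using horthAX j hj
  have I3 : (1 - 2 * π) * ∫ ω, (ε₁ ω * A ω) * g ω ∂μ = 0 := by
    rcases hcond with hcond | hcond
    · rw [hcond]; ring
    · rw [key c UΔ₁ (fun ω => ε₁ ω * A ω) intAXε
        (fun j hj => by simpa [mul_assoc] using horthAX j hj)
        (fun j hj => hsuppγ j (fun hjΓ => hj (hcond hjΓ))), mul_zero]
  -- cross term
  set cr : Ω → ℝ := fun ω =>
    (2 * (A ω - π) ^ 2) * (ε₁ ω * (g ω + A ω * d ω)) with hcr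
  have hcrint : Integrable cr μ := by
    refine Integrable.bdd_mul (c := 2) (mulL2 hε₁L2 hgAdL2) (hAπsm.const_mul 2) ?_
    · refine Filter.Eventually.of_forall fun ω => ?_
      have h1 : ‖(2 : ℝ) * (A ω - π) ^ 2‖ = 2 * (A ω - π) ^ 2 := by
        rw [Real.norm_eq_abs, abs_of_nonneg]; positivity
      rw [h1]
      rcases hA01 ω with h | h <;> rw [h] <;> nlinarith
  -- cross term decomposition and vanishing
  have hcrdec : ∀ ω, cr ω = (2 * π ^ 2) * (ε₁ ω * g ω)
      + (2 * (1 - π) ^ 2) * ((ε₁ ω * A ω) * d ω)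
      + (2 * (1 - 2 * π)) * ((ε₁ ω * A ω) * g ω) := by
    intro ω
    rcases hA01 ω with h | h <;> rw [hcr] <;> simp only [h] <;> ring
  have hcrzero : ∫ ω, cr ω ∂μ = 0 := by
    have intg : Integrable (fun ω => ε₁ ω * g ω) μ := mulL2 hε₁L2 hgL2
    have intAd : Integrable (fun ω => (ε₁ ω * A ω) * d ω) μ := mulL2 hε₁AL2 hdL2
    have intAg : Integrable (fun ω => (ε₁ ω * A ω) * g ω) μ := mulL2 hε₁AL2 hgL2
    have J1 : Integrable (fun ω => (2 * π ^ 2) * (ε₁ ω * g ω)) μ := intg.const_mul _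
    have J2 : Integrable (fun ω => (2 * (1 - π) ^ 2) * ((ε₁ ω * A ω) * d ω)) μ :=
      intAd.const_mul _
    have J3 : Integrable (fun ω => (2 * (1 - 2 * π)) * ((ε₁ ω * A ω) * g ω)) μ :=
      intAg.const_mul _
    have J12 : Integrable (fun ω => (2 * π ^ 2) * (ε₁ ω * g ω)
        + (2 * (1 - π) ^ 2) * ((ε₁ ω * A ω) * d ω)) μ := J1.add J2
    simp_rw [hcrdec]
    rw [integral_add J12 J3, integral_add J1 J2,
      integral_const_mul, integral_const_mul, integral_const_mul, I1, I2]
    have : (2 : ℝ) * (1 - 2 * π) * ∫ ω, (ε₁ ω * A ω) * g ω ∂μ = 0 := by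
      rw [mul_assoc, I3, mul_zero]
    rw [this]
    ring
  -- main comparison
  have hF1int : Integrable (fun ω => (A ω - π) ^ 2 * ε₁ ω ^ 2) μ := by
    refine Integrable.bdd_mul (c := 1) ?_ hAπsm ?_
    · exact (mulL2 hε₁L2 hε₁L2).congr (Filter.Eventually.of_forall fun ω => by ring)
    · refine Filter.Eventually.of_forall fun ω => ?_
      have h1 : ‖(A ω - π) ^ 2‖ = (A ω - π) ^ 2 := by
        rw [Real.norm_eq_abs, abs_of_nonneg]; positivity
      rw [h1]
      rcases hA01 ω with h | h <;> rw [h] <;> nlinarith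
  have hF2int : Integrable (fun ω => (A ω - π) ^ 2 * ε₂ ω ^ 2) μ := by
    refine Integrable.bdd_mul (c := 1) ?_ hAπsm ?_
    · exact (mulL2 hε₂L2 hε₂L2).congr (Filter.Eventually.of_forall fun ω => by ring)
    · refine Filter.Eventually.of_forall fun ω => ?_
      have h1 : ‖(A ω - π) ^ 2‖ = (A ω - π) ^ 2 := by
        rw [Real.norm_eq_abs, abs_of_nonneg]; positivity
      rw [h1]
      rcases hA01 ω with h | h <;> rw [h] <;> nlinarith
  have hpt : ∀ ω, (A ω - π) ^ 2 * ε₁ ω ^ 2 + cr ω ≤ (A ω - π) ^ 2 * ε₂ ω ^ 2 := by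
    intro ω
    have : (A ω - π) ^ 2 * ε₂ ω ^ 2 = (A ω - π) ^ 2 * ε₁ ω ^ 2 + cr ω
        + (A ω - π) ^ 2 * (g ω + A ω * d ω) ^ 2 := by
      rw [hε₂ ω, hcr]; ring
    nlinarith [sq_nonneg (A ω - π), sq_nonneg (g ω + A ω * d ω),
      mul_nonneg (sq_nonneg (A ω - π)) (sq_nonneg (g ω + A ω * d ω))]
  calc ∫ ω, (A ω - π) ^ 2 * ε₁ ω ^ 2 ∂μ
      = ∫ ω, ((A ω - π) ^ 2 * ε₁ ω ^ 2 + cr ω) ∂μ := by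
        rw [integral_add hF1int hcrint, hcrzero, add_zero]
    _ ≤ ∫ ω, (A ω - π) ^ 2 * ε₂ ω ^ 2 ∂μ :=
        integral_mono (hF1int.add hcrint) hF2int hpt
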